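/- For every real a > 0, the improper integral lim_{R→∞} ∫_{−R}^{R} exp(i a x²) dx exists and equals √(π/a) · exp(iπ/4). -/

import Mathlib

open Filter Real Complex intervalIntegral MeasureTheory Set

noncomputable def fresnelS (b : ℂ) : ℂ :=
  (∫ x in (0:ℝ)..1, Complex.exp (b * x ^ 2)) - Complex.exp b / (2 * b)
    + ∫ x in Set.Ioi (1:ℝ), Complex.exp (b * x ^ 2) / (2 * b * x ^ 2)

lemma fresnel_norm_exp (b : ℂ) (hre : b.re ≤ 0) (x : ℝ) :
    ‖Complex.exp (b * x ^ 2)‖ ≤ 1 := by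
  rw [Complex.norm_exp]
  have : (b * (x:ℂ) ^ 2).re = b.re * x ^ 2 := by
    simp [Complex.mul_re, ← Complex.ofReal_pow]
  rw [this]
  exact Real.exp_le_one_iff.mpr (mul_nonpos_of_nonpos_of_nonneg hre (sq_nonneg x))

lemma fresnel_cont (b : ℂ) : Continuous fun x : ℝ => Complex.exp (b * x ^ 2) := by
  fun_prop

lemma fresnel_contOn (b : ℂ) (hb : b ≠ 0) :
    ContinuousOn (fun x : ℝ => Complex.exp (b * x ^ 2) / (2 * b * x ^ 2)) {x : ℝ | x ≠ 0} := by
  apply ContinuousOn.div (fresnel_cont b).continuousOn (by fun_prop)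
  intro x hx
  simp only [mem_setOf_eq] at hx
  simp [hb, hx]

lemma fresnel_integrableOn (b : ℂ) (hb : b ≠ 0) (hre : b.re ≤ 0) :
    IntegrableOn (fun x : ℝ => Complex.exp (b * x ^ 2) / (2 * b * x ^ 2)) (Set.Ioi 1) := by
  have hint : IntegrableOn (fun x : ℝ => (2 * ‖b‖)⁻¹ * x ^ (-2 : ℝ)) (Set.Ioi 1) :=
    (integrableOn_Ioi_rpow_of_lt (by norm_num) one_pos).const_mul _
  have hmeas : AEStronglyMeasurable (fun x : ℝ => Complex.exp (b * x ^ 2) / (2 * b * x ^ 2))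
      (volume.restrict (Set.Ioi 1)) := by
    refine ContinuousOn.aestronglyMeasurable ?_ measurableSet_Ioi
    exact (fresnel_contOn b hb).mono (fun x hx => by
      simp only [mem_setOf_eq]
      exact (lt_of_lt_of_le one_pos (le_of_lt hx)).ne')
  refine hint.mono' hmeas ?_
  filter_upwards [ae_restrict_mem measurableSet_Ioi] with x hx
  have hx0 : (0:ℝ) < x := lt_trans one_pos hx
  have hxabs : ‖(2*b*(x:ℂ)^2)‖ = 2 * ‖b‖ * x ^ 2 := by
    simp [map_mul, Complex.norm_real, abs_of_pos hx0, ← Complex.ofReal_pow,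
      abs_of_pos (pow_pos hx0 2)]
  rw [norm_div, hxabs]
  rw [Real.rpow_neg hx0.le, Real.rpow_two]
  rw [div_eq_mul_inv, mul_inv]
  refine mul_le_of_le_one_left (by positivity) ?_
  exact (fresnel_norm_exp b hre x)


lemma fresnel_hasDerivAt (b : ℂ) (hb : b ≠ 0) {x : ℝ} (hx : x ≠ 0) :
    HasDerivAt (fun y : ℝ => Complex.exp (b * y ^ 2) / (2 * b * y))
      (Complex.exp (b * x ^ 2) - Complex.exp (b * x ^ 2) / (2 * b * x ^ 2)) x := by
  have hxC : (x:ℂ) ≠ 0 := Complex.ofReal_ne_zero.mpr hx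
  have h0 : HasDerivAt (fun y : ℝ => ((y:ℝ):ℂ)) 1 x := by
    simpa using (hasDerivAt_id x).ofReal_comp
  have hsq : HasDerivAt (fun y : ℝ => ((y:ℝ):ℂ) ^ 2) (2 * (x:ℂ)) x := by
    have := h0.mul h0
    simpa [sq, two_mul, Pi.mul_def] using this
  have hN : HasDerivAt (fun y : ℝ => Complex.exp (b * (y:ℂ) ^ 2))
      (Complex.exp (b * (x:ℂ) ^ 2) * (b * (2 * x))) x := by
    have := ((hsq.const_mul b).cexp)
    simpa [mul_comm, mul_assoc, mul_left_comm] using this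
  have hD : HasDerivAt (fun y : ℝ => 2 * b * ((y:ℝ):ℂ)) (2 * b) x := by
    simpa using h0.const_mul (2 * b)
  have hDx : 2 * b * (x:ℂ) ≠ 0 := by simp [hb, hxC]
  have := hN.div hD hDx
  refine this.congr_deriv ?_
  field_simp

lemma fresnel_key (b : ℂ) (hb : b ≠ 0) (hre : b.re ≤ 0) {R : ℝ} (hR : 1 ≤ R) :
    ∫ x in (0:ℝ)..R, Complex.exp (b * x ^ 2)
      = (∫ x in (0:ℝ)..1, Complex.exp (b * x ^ 2))
        + (Complex.exp (b * R ^ 2) / (2 * b * R) - Complex.exp b / (2 * b))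
        + ∫ x in (1:ℝ)..R, Complex.exp (b * x ^ 2) / (2 * b * x ^ 2) := by
  have hsub : Set.uIcc (1:ℝ) R ⊆ {x : ℝ | x ≠ 0} := by
    intro x hx
    rw [Set.uIcc_of_le hR] at hx
    exact (lt_of_lt_of_le one_pos hx.1).ne'
  have hki : IntervalIntegrable (fun x : ℝ => Complex.exp (b * x ^ 2) / (2 * b * x ^ 2))
      volume 1 R := ((fresnel_contOn b hb).mono hsub).intervalIntegrable
  have hfi : IntervalIntegrable (fun x : ℝ => Complex.exp (b * x ^ 2)) volume 1 R :=
    (fresnel_cont b).intervalIntegrable _ _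
  have hftc : ∫ x in (1:ℝ)..R,
      (Complex.exp (b * x ^ 2) - Complex.exp (b * x ^ 2) / (2 * b * x ^ 2))
      = Complex.exp (b * R ^ 2) / (2 * b * R) - Complex.exp b / (2 * b) := by
    have := intervalIntegral.integral_eq_sub_of_hasDerivAt
      (f := fun y : ℝ => Complex.exp (b * y ^ 2) / (2 * b * y))
      (f' := fun x : ℝ => Complex.exp (b * x ^ 2) - Complex.exp (b * x ^ 2) / (2 * b * x ^ 2))
      (fun x hx => fresnel_hasDerivAt b hb (hsub hx)) (hfi.sub hki)
    simpa using this
  have hsplit : ∫ x in (0:ℝ)..R, Complex.exp (b * x ^ 2)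
      = (∫ x in (0:ℝ)..1, Complex.exp (b * x ^ 2)) + ∫ x in (1:ℝ)..R, Complex.exp (b * x ^ 2) :=
    (intervalIntegral.integral_add_adjacent_intervals
      ((fresnel_cont b).intervalIntegrable _ _) hfi).symm
  rw [hsplit, intervalIntegral.integral_sub hfi hki] at *
  rw [add_assoc, ← hftc]
  ring

lemma fresnel_tendsto_S (b : ℂ) (hb : b ≠ 0) (hre : b.re ≤ 0) :
    Tendsto (fun R : ℝ => ∫ x in (0:ℝ)..R, Complex.exp (b * x ^ 2)) atTop
      (nhds (fresnelS b)) := by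
  have h1 : Tendsto (fun R : ℝ => Complex.exp (b * R ^ 2) / (2 * b * R)) atTop (nhds 0) := by
    refine squeeze_zero_norm' (a := fun R : ℝ => (2 * ‖b‖)⁻¹ * R⁻¹) ?_ ?_
    · filter_upwards [eventually_ge_atTop (1:ℝ)] with R hR
      have hR0 : (0:ℝ) < R := lt_of_lt_of_le one_pos hR
      rw [norm_div]
      have : ‖2 * b * (R:ℂ)‖ = 2 * ‖b‖ * R := by
        simp [map_mul, Complex.norm_real, abs_of_pos hR0]
      rw [this, div_eq_mul_inv, mul_inv]
      exact mul_le_of_le_one_left (by positivity)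
        (fresnel_norm_exp b hre R)
    · simpa using tendsto_inv_atTop_zero.const_mul (2 * ‖b‖)⁻¹
  have h2 : Tendsto (fun R : ℝ => ∫ x in (1:ℝ)..R, Complex.exp (b * x ^ 2) / (2 * b * x ^ 2))
      atTop (nhds (∫ x in Set.Ioi (1:ℝ), Complex.exp (b * x ^ 2) / (2 * b * x ^ 2))) :=
    intervalIntegral_tendsto_integral_Ioi 1 (fresnel_integrableOn b hb hre) tendsto_id
  have hmain : Tendsto (fun R : ℝ =>
      (∫ x in (0:ℝ)..1, Complex.exp (b * x ^ 2))
        + (Complex.exp (b * R ^ 2) / (2 * b * R) - Complex.exp b / (2 * b))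
        + ∫ x in (1:ℝ)..R, Complex.exp (b * x ^ 2) / (2 * b * x ^ 2)) atTop
      (nhds (fresnelS b)) := by
    have : fresnelS b = (∫ x in (0:ℝ)..1, Complex.exp (b * x ^ 2))
        + ((0:ℂ) - Complex.exp b / (2 * b))
        + ∫ x in Set.Ioi (1:ℝ), Complex.exp (b * x ^ 2) / (2 * b * x ^ 2) := by
      rw [fresnelS]; ring
    rw [this]
    exact ((tendsto_const_nhds.add (h1.sub tendsto_const_nhds)).add h2)
  apply hmain.congr'
  filter_upwards [eventually_ge_atTop (1:ℝ)] with R hR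
  exact (fresnel_key b hb hre hR).symm


lemma fresnel_norm_k (b : ℂ) (hb : b ≠ 0) (hre : b.re ≤ 0) {x : ℝ} (hx : 1 < x) :
    ‖Complex.exp (b * x ^ 2) / (2 * b * x ^ 2)‖ ≤ (2 * ‖b‖)⁻¹ * x ^ (-2 : ℝ) := by
  have hx0 : (0:ℝ) < x := lt_trans one_pos hx
  have hxabs : ‖(2*b*(x:ℂ)^2)‖ = 2 * ‖b‖ * x ^ 2 := by
    simp [map_mul, Complex.norm_real, abs_of_pos hx0, ← Complex.ofReal_pow,
      abs_of_pos (pow_pos hx0 2)]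
  rw [norm_div, hxabs]
  rw [Real.rpow_neg hx0.le, Real.rpow_two]
  rw [div_eq_mul_inv, mul_inv]
  refine mul_le_of_le_one_left (by positivity) ?_
  exact (fresnel_norm_exp b hre x)

lemma fresnel_even (b : ℂ) (R : ℝ) :
    ∫ x in (-R)..R, Complex.exp (b * x ^ 2) = 2 * ∫ x in (0:ℝ)..R, Complex.exp (b * x ^ 2) := by
  have h1 : ∫ x in (-R)..(0:ℝ), Complex.exp (b * x ^ 2)
      = ∫ x in (0:ℝ)..R, Complex.exp (b * x ^ 2) := by
    have := intervalIntegral.integral_comp_neg (a := (0:ℝ)) (b := R)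
      (fun x : ℝ => Complex.exp (b * x ^ 2))
    simp only [Complex.ofReal_neg, neg_sq, neg_zero] at this
    rw [← this]
  rw [← intervalIntegral.integral_add_adjacent_intervals (a := -R) (b := (0:ℝ)) (c := R)
    ((fresnel_cont b).intervalIntegrable _ _) ((fresnel_cont b).intervalIntegrable _ _),
    h1, two_mul]

lemma fresnel_value (a : ℝ) (ha : 0 < a) {ε : ℝ} (hε : 0 < ε) :
    fresnelS (Complex.I * a - ε) = (↑π / ((ε:ℂ) - Complex.I * a)) ^ (1/2 : ℂ) / 2 := by
  set b : ℂ := Complex.I * a - ε with hbdef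
  have hbre : b.re = -ε := by simp [hbdef]
  have hb : b ≠ 0 := by
    intro h
    rw [h] at hbre
    simp at hbre
    linarith
  have hre : b.re ≤ 0 := by rw [hbre]; linarith
  have hpos : (0:ℝ) < ((ε:ℂ) - Complex.I * a).re := by simpa using hε
  have hInt : Integrable (fun x : ℝ => Complex.exp (b * x ^ 2)) := by
    have := integrable_cexp_neg_mul_sq (b := (ε:ℂ) - Complex.I * a) hpos
    have hneg : -((ε:ℂ) - Complex.I * a) = b := by rw [hbdef]; ring
    simpa [hneg] using this
  have t1 : Tendsto (fun R : ℝ => ∫ x in (-R)..R, Complex.exp (b * x ^ 2)) atTop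
      (nhds (∫ x : ℝ, Complex.exp (b * x ^ 2))) :=
    intervalIntegral_tendsto_integral hInt tendsto_neg_atTop_atBot tendsto_id
  have t2 : Tendsto (fun R : ℝ => ∫ x in (-R)..R, Complex.exp (b * x ^ 2)) atTop
      (nhds (2 * fresnelS b)) := by
    have := (fresnel_tendsto_S b hb hre).const_mul (2:ℂ)
    apply this.congr
    intro R
    exact (fresnel_even b R).symm
  have huniq : (∫ x : ℝ, Complex.exp (b * x ^ 2)) = 2 * fresnelS b :=
    tendsto_nhds_unique t1 t2
  have hg : (∫ x : ℝ, Complex.exp (b * x ^ 2))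
      = (↑π / ((ε:ℂ) - Complex.I * a)) ^ (1/2 : ℂ) := by
    have := integral_gaussian_complex (b := (ε:ℂ) - Complex.I * a) hpos
    have hneg : -((ε:ℂ) - Complex.I * a) = b := by rw [hbdef]; ring
    rw [← this]
    simp_rw [hneg]
  rw [hg] at huniq
  field_simp [huniq]
  linear_combination -huniq

lemma fresnel_cpow (r : ℝ) (hr : 0 < r) :
    ((r:ℂ) * Complex.I) ^ (1/2 : ℂ)
      = (Real.sqrt r : ℂ) * Complex.exp (Complex.I * π / 4) := by
  have hz : (r:ℂ) * Complex.I ≠ 0 := by simp [hr.ne']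
  rw [Complex.cpow_def_of_ne_zero hz]
  have hlog : Complex.log ((r:ℂ) * Complex.I) = (Real.log r : ℂ) + (π/2 : ℝ) * Complex.I := by
    rw [Complex.log]
    have habs : ‖(r:ℂ) * Complex.I‖ = r := by simp [abs_of_pos hr]
    have harg : ((r:ℂ) * Complex.I).arg = π/2 := by
      rw [Complex.arg_real_mul _ hr, Complex.arg_I]
    rw [habs, harg]
  rw [hlog]
  have : ((Real.log r : ℂ) + (π/2 : ℝ) * Complex.I) * (1/2 : ℂ)
      = ((Real.log r / 2 : ℝ) : ℂ) + Complex.I * π / 4 := by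
    push_cast
    ring
  rw [this, Complex.exp_add]
  have h2 : Complex.exp ((Real.log r / 2 : ℝ) : ℂ) = ((Real.sqrt r : ℝ) : ℂ) := by
    rw [← Complex.ofReal_exp]
    norm_cast
    rw [Real.sqrt_eq_rpow, Real.rpow_def_of_pos hr]
    congr 1
    ring
  rw [h2]



lemma fresnel_limit (a : ℝ) (ha : 0 < a) :
    Tendsto (fun ε : ℝ => fresnelS (Complex.I * a - ε)) (nhdsWithin 0 (Set.Ioi 0))
      (nhds (fresnelS (Complex.I * a))) := by
  have key_re : ∀ ε : ℝ, 0 < ε → (Complex.I * (a:ℂ) - ε).re ≤ 0 := by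
    intro ε hε; simp; linarith
  have key_ne : ∀ ε : ℝ, 0 < ε → Complex.I * (a:ℂ) - (ε:ℂ) ≠ 0 := by
    intro ε hε h
    have := congrArg Complex.re h
    simp at this
    linarith
  have key_abs : ∀ ε : ℝ, a ≤ ‖Complex.I * (a:ℂ) - ε‖ := by
    intro ε
    have h1 : (Complex.I * (a:ℂ) - ε).im = a := by simp
    have := Complex.abs_im_le_norm (Complex.I * (a:ℂ) - ε)
    rw [h1, abs_of_pos ha] at this
    exact this
  have hT1 : Tendsto (fun ε : ℝ => ∫ x in (0:ℝ)..1, Complex.exp ((Complex.I * a - ε) * x ^ 2))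
      (nhdsWithin 0 (Set.Ioi 0))
      (nhds (∫ x in (0:ℝ)..1, Complex.exp ((Complex.I * a) * x ^ 2))) := by
    simp_rw [intervalIntegral.integral_of_le zero_le_one]
    apply MeasureTheory.tendsto_integral_filter_of_dominated_convergence (bound := fun _ => (1:ℝ))
    · exact Eventually.of_forall fun ε =>
        ((fresnel_cont _).aestronglyMeasurable).restrict
    · filter_upwards [self_mem_nhdsWithin] with ε hε
      exact MeasureTheory.ae_of_all _ fun x => fresnel_norm_exp _ (key_re ε hε) x
    · exact (MeasureTheory.integrableOn_const_iff).mpr (Or.inr measure_Ioc_lt_top)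
    · refine MeasureTheory.ae_of_all _ fun x => ?_
      have hc : ContinuousAt (fun ε : ℝ => Complex.exp ((Complex.I * a - ε) * x ^ 2)) 0 := by
        fun_prop
      have := hc.tendsto.mono_left (nhdsWithin_le_nhds (s := Set.Ioi 0))
      simpa using this
  have hmid : Tendsto (fun ε : ℝ =>
      Complex.exp (Complex.I * a - ε) / (2 * (Complex.I * a - ε)))
      (nhdsWithin 0 (Set.Ioi 0))
      (nhds (Complex.exp (Complex.I * a) / (2 * (Complex.I * a)))) := by
    have hden : (2 * (Complex.I * (a:ℂ) - ((0:ℝ):ℂ))) ≠ 0 := by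
      simp [Complex.ext_iff, ha.ne']
    have hc : ContinuousAt (fun ε : ℝ =>
        Complex.exp (Complex.I * a - ε) / (2 * (Complex.I * a - ε))) 0 :=
      ContinuousAt.div (by fun_prop) (by fun_prop) hden
    have := hc.tendsto.mono_left (nhdsWithin_le_nhds (s := Set.Ioi 0))
    simpa using this
  have hT2 : Tendsto (fun ε : ℝ => ∫ x in Set.Ioi (1:ℝ),
      Complex.exp ((Complex.I * a - ε) * x ^ 2) / (2 * (Complex.I * a - ε) * x ^ 2))
      (nhdsWithin 0 (Set.Ioi 0))
      (nhds (∫ x in Set.Ioi (1:ℝ),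
        Complex.exp ((Complex.I * a) * x ^ 2) / (2 * (Complex.I * a) * x ^ 2))) := by
    apply MeasureTheory.tendsto_integral_filter_of_dominated_convergence
      (bound := fun x : ℝ => (2 * a)⁻¹ * x ^ (-2 : ℝ))
    · filter_upwards [self_mem_nhdsWithin] with ε hε
      exact (fresnel_integrableOn _ (key_ne ε hε) (key_re ε hε)).aestronglyMeasurable
    · filter_upwards [self_mem_nhdsWithin] with ε hε
      filter_upwards [MeasureTheory.ae_restrict_mem measurableSet_Ioi] with x hx
      calc ‖Complex.exp ((Complex.I * a - ε) * x ^ 2) / (2 * (Complex.I * a - ε) * x ^ 2)‖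
          ≤ (2 * ‖Complex.I * a - ε‖)⁻¹ * x ^ (-2 : ℝ) :=
            fresnel_norm_k _ (key_ne ε hε) (key_re ε hε) hx
        _ ≤ (2 * a)⁻¹ * x ^ (-2 : ℝ) := by
            have hx0 : (0:ℝ) < x := lt_trans one_pos hx
            have h1 : (2 * a)⁻¹ ≥ (2 * ‖Complex.I * a - ε‖)⁻¹ := by
              apply inv_anti₀ (by positivity)
              have := key_abs ε
              linarith
            have h2 : (0:ℝ) ≤ x ^ (-2 : ℝ) := Real.rpow_nonneg hx0.le _
            exact mul_le_mul_of_nonneg_right h1 h2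
    · exact (integrableOn_Ioi_rpow_of_lt (by norm_num) one_pos).const_mul _
    · filter_upwards [MeasureTheory.ae_restrict_mem measurableSet_Ioi] with x hx
      have hx0 : (0:ℝ) < x := lt_trans one_pos hx
      have hden : (2 * (Complex.I * (a:ℂ) - ((0:ℝ):ℂ)) * ((x:ℝ):ℂ) ^ 2) ≠ 0 := by
        simp [Complex.ext_iff, ha.ne', hx0.ne']
      have hc : ContinuousAt (fun ε : ℝ =>
          Complex.exp ((Complex.I * a - ε) * x ^ 2) / (2 * (Complex.I * a - ε) * x ^ 2)) 0 :=
        ContinuousAt.div (by fun_prop) (by fun_prop) hden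
      have := hc.tendsto.mono_left (nhdsWithin_le_nhds (s := Set.Ioi 0))
      simpa using this
  simp only [fresnelS]
  exact (hT1.sub hmid).add hT2


/-- Fresnel integral: for `a > 0`,
`lim_{R→∞} ∫_{-R}^{R} exp(i a x²) dx = √(π/a) ⬝ exp(iπ/4)`. -/
theorem fresnel_integral (a : ℝ) (ha : 0 < a) :
    Tendsto (fun R : ℝ => ∫ x in (-R)..R, Complex.exp (Complex.I * a * x ^ 2)) atTop
      (nhds ((Real.sqrt (π / a) : ℂ) * Complex.exp (Complex.I * π / 4))) := by
  have hb : Complex.I * (a:ℂ) ≠ 0 := by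
    intro h
    have := congrArg Complex.im h
    simp at this
    exact ha.ne' this
  have hre : (Complex.I * (a:ℂ)).re ≤ 0 := by simp
  have hmain := (fresnel_tendsto_S (Complex.I * a) hb hre).const_mul (2:ℂ)
  have hne : (0:ℂ) - Complex.I * a ≠ 0 := by simpa using hb
  have heq : 2 * fresnelS (Complex.I * a)
      = (Real.sqrt (π / a) : ℂ) * Complex.exp (Complex.I * π / 4) := by
    have hU := fresnel_limit a ha
    have hV : Tendsto (fun ε : ℝ => fresnelS (Complex.I * a - ε)) (nhdsWithin 0 (Set.Ioi 0))
        (nhds ((Real.sqrt (π / a) : ℂ) * Complex.exp (Complex.I * π / 4) / 2)) := by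
      have hrw : ∀ᶠ ε : ℝ in nhdsWithin 0 (Set.Ioi 0),
          (↑π / ((ε:ℂ) - Complex.I * a)) ^ (1/2 : ℂ) / 2 = fresnelS (Complex.I * a - ε) := by
        filter_upwards [self_mem_nhdsWithin] with ε hε
        exact (fresnel_value a ha hε).symm
      refine Tendsto.congr' hrw ?_
      have hden : Tendsto (fun ε : ℝ => (ε:ℂ) - Complex.I * a) (nhdsWithin 0 (Set.Ioi 0))
          (nhds ((0:ℂ) - Complex.I * a)) := by
        have hc : ContinuousAt (fun ε : ℝ => (ε:ℂ) - Complex.I * a) 0 := by fun_prop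
        have := hc.tendsto.mono_left (nhdsWithin_le_nhds (s := Set.Ioi 0))
        simpa using this
      have hfrac : Tendsto (fun ε : ℝ => (↑π : ℂ) / ((ε:ℂ) - Complex.I * a))
          (nhdsWithin 0 (Set.Ioi 0)) (nhds ((↑π : ℂ) / ((0:ℂ) - Complex.I * a))) :=
        tendsto_const_nhds.div hden hne
      have hval : (↑π : ℂ) / ((0:ℂ) - Complex.I * a) = ((π / a : ℝ) : ℂ) * Complex.I := by
        have haC : ((a:ℝ):ℂ) ≠ 0 := by exact_mod_cast ha.ne'
        have key : ((π / a : ℝ) : ℂ) * Complex.I * ((0:ℂ) - Complex.I * a) = ↑π := by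
          push_cast
          have h3 : ((π:ℂ) / a) * Complex.I * ((0:ℂ) - Complex.I * a)
              = (π:ℂ) / a * a * (-(Complex.I * Complex.I)) := by ring
          rw [h3, div_mul_cancel₀ _ haC, Complex.I_mul_I]
          ring
        rw [div_eq_iff hne, ← key]
      rw [hval] at hfrac
      have hmem : ((π / a : ℝ) : ℂ) * Complex.I ∈ Complex.slitPlane := by
        rw [Complex.mem_slitPlane_iff]
        right
        simp [Real.pi_ne_zero, ha.ne', div_eq_zero_iff]
      have hpow : Tendsto (fun ε : ℝ => ((↑π : ℂ) / ((ε:ℂ) - Complex.I * a)) ^ (1/2 : ℂ))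
          (nhdsWithin 0 (Set.Ioi 0))
          (nhds ((((π / a : ℝ) : ℂ) * Complex.I) ^ (1/2 : ℂ))) :=
        (continuousAt_cpow_const hmem).tendsto.comp hfrac
      rw [fresnel_cpow (π / a) (by positivity)] at hpow
      exact hpow.div_const 2
    have huniq : fresnelS (Complex.I * a)
        = (Real.sqrt (π / a) : ℂ) * Complex.exp (Complex.I * π / 4) / 2 :=
      tendsto_nhds_unique hU hV
    rw [huniq]
    ring
  rw [← heq]
  apply hmain.congr
  intro R
  rw [← fresnel_even (Complex.I * a) R]
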